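/- Let Z be a Hilbert space, M dissipative with μI − M bijective for μ > 0, N ∈ L(Z) skew-symmetric, and suppose z solves (M+N)z = g. For the Peaceman-Rachford iterates z^i with Δz^i = z − z^i and Δf^i = (μI − M)Δz^i, it holds that 0 ≤ −Re⟨Δz^i, M Δz^i⟩ ≤ (1/(4μ))(‖Δf^i‖² − ‖Δf^{i+1}‖²); consequently Re⟨Δz^i, M Δz^i⟩ → 0 as i → ∞. -/

import Mathlib

open Filter

/-- The residual `Δfⁱ = (μI − M)(z − zⁱ)` of the Peaceman–Rachford iteration. -/
noncomputable def deltaF {Z : Type*} [NormedAddCommGroup Z] [InnerProductSpace ℂ Z]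
    {dom : Submodule ℂ Z} (M : dom →ₗ[ℂ] Z) (μ : ℝ) (z : dom) (zseq : ℕ → dom)
    (i : ℕ) : Z :=
  (μ : ℂ) • ((z - zseq i : dom) : Z) - M (z - zseq i)

/-- Peaceman–Rachford error decay: if `M` is dissipative with `μI − M` bijective,
`N` is bounded skew-symmetric, `z` solves `(M+N)z = g`, and `zⁱ⁺¹ = F(zⁱ)` is the
Peaceman–Rachford iteration, then with `Δfⁱ = (μI − M)(z − zⁱ)` one has
`0 ≤ −Re⟨Δzⁱ, MΔzⁱ⟩ ≤ (1/(4μ))(‖Δfⁱ‖² − ‖Δfⁱ⁺¹‖²)`; consequently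
`Re⟨Δzⁱ, MΔzⁱ⟩ → 0` as `i → ∞`. -/
theorem stmt7 {Z : Type*} [NormedAddCommGroup Z] [InnerProductSpace ℂ Z]
    [CompleteSpace Z]
    (dom : Submodule ℂ Z) (M : dom →ₗ[ℂ] Z) (N : Z →L[ℂ] Z) (g : Z)
    (μ : ℝ) (hμ : 0 < μ)
    (hdiss : ∀ x : dom, (inner ℂ ((x : Z)) (M x) : ℂ).re ≤ 0)
    (hskew : ∀ x y : Z, (inner ℂ (N x) y : ℂ) = -(inner ℂ x (N y) : ℂ))
    (Minv : Z → dom)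
    (hMinv : ∀ y : Z, (μ : ℂ) • ((Minv y : dom) : Z) - M (Minv y) = y)
    (hMinv' : ∀ x : dom, Minv ((μ : ℂ) • (x : Z) - M x) = x)
    (Ninv : Z → Z)
    (hNinv : ∀ y : Z, (μ : ℂ) • (Ninv y) - N (Ninv y) = y)
    (hNinv' : ∀ x : Z, Ninv ((μ : ℂ) • x - N x) = x)
    (z : dom) (hz : M z + N z = g)
    (zseq : ℕ → dom)
    (hiter : ∀ i : ℕ, zseq (i + 1) =
      Minv (((μ : ℂ) • Ninv ((μ : ℂ) • ((zseq i : dom) : Z) + M (zseq i))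
            + N (Ninv ((μ : ℂ) • ((zseq i : dom) : Z) + M (zseq i))))
          - (((μ : ℂ) • Ninv g + N (Ninv g)) + g))) :
    (∀ i : ℕ,
        0 ≤ -(inner ℂ (((z - zseq i : dom) : Z)) (M (z - zseq i)) : ℂ).re ∧
        -(inner ℂ (((z - zseq i : dom) : Z)) (M (z - zseq i)) : ℂ).re ≤
          (1 / (4 * μ)) *
            (‖deltaF M μ z zseq i‖ ^ 2 - ‖deltaF M μ z zseq (i + 1)‖ ^ 2)) ∧
      Tendsto (fun i => (inner ℂ (((z - zseq i : dom) : Z)) (M (z - zseq i)) : ℂ).re)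
        atTop (nhds 0) := by
  -- Re⟨u, Nu⟩ = 0
  have hre0 : ∀ u : Z, (inner ℂ u (N u) : ℂ).re = 0 := by
    intro u
    have h1 := hskew u u
    have h2 : (inner ℂ (N u) u : ℂ) = starRingEnd ℂ (inner ℂ u (N u) : ℂ) := by
      rw [inner_conj_symm]
    rw [h2] at h1
    have h3 := congrArg Complex.re h1
    simp only [Complex.conj_re, Complex.neg_re] at h3
    linarith
  -- ‖μu + Nu‖² = ‖μu − Nu‖²
  have hnormsq : ∀ u : Z, ‖(μ:ℂ) • u + N u‖^2 = ‖(μ:ℂ) • u - N u‖^2 := by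
    intro u
    have e1 := norm_add_sq (𝕜 := ℂ) ((μ:ℂ) • u) (N u)
    have e2 := norm_sub_sq (𝕜 := ℂ) ((μ:ℂ) • u) (N u)
    have e3 : (inner ℂ ((μ:ℂ) • u) (N u) : ℂ).re = 0 := by
      rw [inner_smul_left]
      simp [hre0 u]
    simp only [RCLike.re_to_complex] at e1 e2
    rw [e3] at e1 e2
    rw [e1, e2]; ring
  have hNz : N (z : Z) = g - M z := by rw [← hz]; abel
  -- key recursion
  have hkey : ∀ i, ‖deltaF M μ z zseq (i+1)‖^2
      = ‖(μ:ℂ) • ((z - zseq i : dom) : Z) + M (z - zseq i)‖^2 := by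
    intro i
    set p : Z := (μ : ℂ) • ((zseq i : dom) : Z) + M (zseq i) with hp
    set y : Z := ((μ : ℂ) • Ninv p + N (Ninv p)) - (((μ : ℂ) • Ninv g + N (Ninv g)) + g) with hy
    have h1' : N (Ninv g) = (μ:ℂ) • Ninv g - g := by
      have h := hNinv g
      rw [sub_eq_iff_eq_add] at h
      rw [h]; abel
    have h2' : N (Ninv p) = (μ:ℂ) • Ninv p - p := by
      have h := hNinv p
      rw [sub_eq_iff_eq_add] at h
      rw [h]; abel
    set w : Z := (z : Z) + Ninv g - Ninv p with hw
    have hwe : (μ:ℂ) • w - N w = (μ:ℂ) • ((z - zseq i : dom) : Z) + M (z - zseq i) := by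
      rw [hw]
      simp only [map_add, map_sub, Submodule.coe_sub]
      rw [hNz, h1', h2', hp]
      module
    have hNe : Ninv ((μ:ℂ) • ((z - zseq i : dom) : Z) + M (z - zseq i)) = w := by
      rw [← hwe, hNinv']
    have hMy : M (Minv y) = (μ:ℂ) • ((Minv y : dom) : Z) - y := by
      have h := hMinv y
      rw [sub_eq_iff_eq_add] at h
      rw [h]; abel
    have hdf : deltaF M μ z zseq (i+1) = ((μ:ℂ) • (z:Z) - M z) - y := by
      simp only [deltaF, Submodule.coe_sub, map_sub, smul_sub]
      rw [hiter i, ← hy, hMy]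
      abel
    have hstep : deltaF M μ z zseq (i+1) = (μ:ℂ) • w + N w := by
      rw [hdf, hw, hy]
      simp only [map_add, map_sub]
      rw [hNz, h1', h2', hp]
      module
    rw [hstep]
    calc ‖(μ:ℂ) • w + N w‖^2 = ‖(μ:ℂ) • w - N w‖^2 := hnormsq w
      _ = _ := by rw [hwe]
  -- norm splitting
  have hA : ∀ x : dom, ‖(μ:ℂ) • (x:Z) - M x‖^2
      = ‖(μ:ℂ) • (x:Z) + M x‖^2 - 4*μ*(inner ℂ (x:Z) (M x) : ℂ).re := by
    intro x
    have e1 := norm_add_sq (𝕜 := ℂ) ((μ:ℂ) • (x:Z)) (M x)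
    have e2 := norm_sub_sq (𝕜 := ℂ) ((μ:ℂ) • (x:Z)) (M x)
    have e3 : (inner ℂ ((μ:ℂ) • (x:Z)) (M x) : ℂ).re = μ * (inner ℂ (x:Z) (M x) : ℂ).re := by
      rw [inner_smul_left]
      simp
    simp only [RCLike.re_to_complex] at e1 e2
    rw [e3] at e1 e2
    rw [e1, e2]; ring
  set r : ℕ → ℝ := fun i => -(inner ℂ (((z - zseq i : dom) : Z)) (M (z - zseq i)) : ℂ).re with hr
  set a : ℕ → ℝ := fun i => ‖deltaF M μ z zseq i‖^2 with ha
  have hdiff : ∀ i, a i - a (i+1) = 4*μ * r i := by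
    intro i
    have h1 := hA (z - zseq i)
    simp only [ha, hr]
    rw [show deltaF M μ z zseq i = (μ:ℂ) • ((z - zseq i : dom) : Z) - M (z - zseq i) from rfl,
      h1, hkey i]
    ring
  have hrnn : ∀ i, 0 ≤ r i := fun i => by
    simp only [hr, neg_nonneg]; exact hdiss _
  constructor
  · intro i
    refine ⟨hrnn i, ?_⟩
    have h := hdiff i
    have : (1 / (4 * μ)) * (a i - a (i+1)) = r i := by
      rw [h]; field_simp
    simp only [ha] at this
    rw [this]
  · -- convergence
    have hant : Antitone a := antitone_nat_of_succ_le (by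
      intro i
      have := hdiff i
      nlinarith [hrnn i])
    have hbdd : BddBelow (Set.range a) := by
      refine ⟨0, ?_⟩
      rintro x ⟨i, rfl⟩
      positivity
    have hconv : Tendsto a atTop (nhds (⨅ i, a i)) := tendsto_atTop_ciInf hant hbdd
    have hconv' : Tendsto (fun i => a (i+1)) atTop (nhds (⨅ i, a i)) :=
      hconv.comp (tendsto_add_atTop_nat 1)
    have hsub : Tendsto (fun i => a i - a (i+1)) atTop (nhds 0) := by
      have := hconv.sub hconv'
      simpa using this
    have hrt : Tendsto r atTop (nhds 0) := by
      have := hsub.const_mul (1 / (4*μ))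
      simp only [mul_zero] at this
      refine this.congr (fun i => ?_)
      rw [hdiff i]; field_simp
    have := hrt.neg
    simp only [neg_zero] at this
    refine this.congr (fun i => ?_)
    simp [hr]
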